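/- Let g : ℝⁿ → ℝ be a continuous function with g(0) = 0, and for r > 0 define η_r = − min_{‖s‖≤r} g(s), assuming η_r ≥ 0 for all r. If g is convex, then for any r > 0, η_r ≥ min{1, r} · η₁. -/

import Mathlib

theorem stmt_2 {n : ℕ} (g : EuclideanSpace ℝ (Fin n) → ℝ)
    (hg : Continuous g) (hg0 : g 0 = 0)
    (hconv : ConvexOn ℝ Set.univ g)
    (hη : ∀ r : ℝ, 0 < r →
      0 ≤ -sInf (g '' Metric.closedBall (0 : EuclideanSpace ℝ (Fin n)) r)) :
    ∀ r : ℝ, 0 < r →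
      min 1 r * (-sInf (g '' Metric.closedBall (0 : EuclideanSpace ℝ (Fin n)) 1)) ≤
        -sInf (g '' Metric.closedBall (0 : EuclideanSpace ℝ (Fin n)) r) := by
  intro r hr
  have hcomp : ∀ t : ℝ, IsCompact (g '' Metric.closedBall (0 : EuclideanSpace ℝ (Fin n)) t) :=
    fun t => (isCompact_closedBall 0 t).image hg
  have hne : ∀ t : ℝ, 0 ≤ t →
      (g '' Metric.closedBall (0 : EuclideanSpace ℝ (Fin n)) t).Nonempty := by
    intro t ht
    exact ⟨g 0, Set.mem_image_of_mem g (by simpa using ht)⟩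
  have hbdd : ∀ t : ℝ, BddBelow (g '' Metric.closedBall (0 : EuclideanSpace ℝ (Fin n)) t) :=
    fun t => (hcomp t).bddBelow
  rcases le_or_gt 1 r with h1r | h1r
  · rw [min_eq_left h1r, one_mul, neg_le_neg_iff]
    apply csInf_le_csInf (hbdd r) (hne 1 one_pos.le)
    exact Set.image_mono (Metric.closedBall_subset_closedBall h1r)
  · rw [min_eq_right h1r.le]
    have key : sInf (g '' Metric.closedBall (0 : EuclideanSpace ℝ (Fin n)) r) ≤
        r * sInf (g '' Metric.closedBall (0 : EuclideanSpace ℝ (Fin n)) 1) := by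
      rw [mul_comm, ← div_le_iff₀ hr]
      apply le_csInf (hne 1 one_pos.le)
      rintro y ⟨s, hs, rfl⟩
      rw [div_le_iff₀ hr, mul_comm]
      have hmem : r • s ∈ Metric.closedBall (0 : EuclideanSpace ℝ (Fin n)) r := by
        simp only [Metric.mem_closedBall, dist_zero_right] at hs ⊢
        calc ‖r • s‖ = r * ‖s‖ := by rw [norm_smul, Real.norm_eq_abs, abs_of_pos hr]
          _ ≤ r * 1 := by nlinarith
          _ = r := mul_one r
      have hconv' : g (r • s) ≤ r * g s := by
        have := hconv.2 (Set.mem_univ s) (Set.mem_univ (0 : EuclideanSpace ℝ (Fin n)))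
          hr.le (by linarith : (0:ℝ) ≤ 1 - r) (by ring)
        simpa [hg0] using this
      calc sInf (g '' Metric.closedBall (0 : EuclideanSpace ℝ (Fin n)) r)
          ≤ g (r • s) := csInf_le (hbdd r) (Set.mem_image_of_mem g hmem)
        _ ≤ r * g s := hconv'
    nlinarith
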